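/- Let Γ act transitively on the vertices of a graph G by automorphisms, let u be a vertex and λ an involution in Γ such that λ(u) is adjacent to u and the subgraph G_{u,λ} generated by λ has every vertex of degree k. Then every connected component of G_{u,λ} consists of two vertices v, λ(v) joined by k parallel edges; in particular if k = 1 then G_{u,λ} is a perfect matching of G, and if k ≥ 3 then G_{u,λ} contains a spanning cubic bipartite subgraph. -/

import Mathlib

/-- A multigraph: an abstract edge set `E` together with an assignment of an unordered
pair of end-vertices to each edge. Loops and parallel edges are allowed. -/
structure Multigraph (V E : Type*) where
  ends : E → Sym2 V

namespace Multigraph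

variable {V E : Type*}

/-- A multigraph is loopless if no edge is a loop. -/
def Loopless (G : Multigraph V E) : Prop := ∀ e, ¬ (G.ends e).IsDiag

/-- Two vertices are adjacent if some edge joins them. -/
def Adj (G : Multigraph V E) (v w : V) : Prop := ∃ e, G.ends e = s(v, w)

/-- A multigraph is connected if any two vertices are joined by a walk. -/
def Connected (G : Multigraph V E) : Prop := ∀ v w : V, Relation.ReflTransGen G.Adj v w

open Classical in
/-- The number of times edge `e` is incident with vertex `v` (a loop counts twice). -/
noncomputable def incCount (G : Multigraph V E) (v : V) (e : E) : ℕ :=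
  if G.ends e = Sym2.diag v then 2 else if v ∈ G.ends e then 1 else 0

/-- The degree of a vertex. -/
noncomputable def degree (G : Multigraph V E) [Fintype E] (v : V) : ℕ :=
  ∑ e, G.incCount v e

open Classical in
/-- The degree of a vertex in the spanning subgraph with edge set `S`. -/
noncomputable def degreeIn (G : Multigraph V E) [Fintype E] (S : Set E) (v : V) : ℕ :=
  ∑ e, if e ∈ S then G.incCount v e else 0

/-- An orientation of a multigraph: each edge gets a tail and a head realizing its ends. -/
structure Orientation (G : Multigraph V E) where
  tail : E → V
  head : E → V
  consistent : ∀ e, G.ends e = s(tail e, head e)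

open Classical in
/-- Sum of `φ` over the edges with tail `v`. -/
noncomputable def outflow [Fintype E] {G : Multigraph V E} (D : G.Orientation)
    (φ : E → ℤ) (v : V) : ℤ :=
  ∑ e, if D.tail e = v then φ e else 0

open Classical in
/-- Sum of `φ` over the edges with head `v`. -/
noncomputable def inflow [Fintype E] {G : Multigraph V E} (D : G.Orientation)
    (φ : E → ℤ) (v : V) : ℤ :=
  ∑ e, if D.head e = v then φ e else 0

/-- `(D, φ)` is a `k`-flow: all values have absolute value `< k` and flow is conserved. -/
def IsFlow [Fintype E] {G : Multigraph V E} (D : G.Orientation) (φ : E → ℤ) (k : ℕ) : Prop :=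
  (∀ e, |φ e| < (k : ℤ)) ∧ ∀ v : V, outflow D φ v = inflow D φ v

/-- `G` admits a nowhere-zero `k`-flow. -/
def HasNowhereZeroFlow (G : Multigraph V E) [Fintype E] (k : ℕ) : Prop :=
  ∃ (D : G.Orientation) (φ : E → ℤ), IsFlow D φ k ∧ ∀ e, φ e ≠ 0

/-- The automorphism group of a multigraph, as a subgroup of `Perm V × Perm E`:
pairs of permutations compatible with the incidence structure. -/
def aut (G : Multigraph V E) : Subgroup (Equiv.Perm V × Equiv.Perm E) where
  carrier := {p | ∀ e, G.ends (p.2 e) = (G.ends e).map p.1}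
  one_mem' := by
    intro e
    simp
  mul_mem' := by
    intro p q hp hq e
    have h1 := hp (q.2 e)
    have h2 := hq e
    simp only [Prod.snd_mul, Prod.fst_mul, Equiv.Perm.mul_apply, Equiv.Perm.coe_mul]
    rw [h1, h2, Sym2.map_map]
  inv_mem' := by
    intro p hp e
    have h := hp ((p.2)⁻¹ e)
    rw [show p.2 (p.2⁻¹ e) = e from Equiv.apply_symm_apply p.2 e] at h
    rw [Prod.snd_inv, Prod.fst_inv, h, Sym2.map_map]
    have : (⇑(p.1)⁻¹ ∘ ⇑p.1) = id := by
      ext x; simp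
    rw [this, Sym2.map_id, id_eq]

end Multigraph

open Multigraph in
/-- The edge set of the spanning subgraph `G_{u,a}` of `G` generated by `a` with
reference vertex `u`. -/
def genEdges {Γ V E : Type*} [Group Γ] [MulAction Γ V]
    (G : Multigraph V E) (u : V) (a : Γ) : Set E :=
  {e | ∃ γ : Γ, ∃ β ∈ MulAction.stabilizer Γ u, G.ends e = s(γ • u, (γ * β * a) • u)}

open Classical in
private lemma incCount_eq_aux {V E : Type*} (G : Multigraph V E) (hl : G.Loopless)
    (v : V) (e : E) :
    G.incCount v e = if v ∈ G.ends e then 1 else 0 := by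
  classical
  unfold Multigraph.incCount
  have hne : G.ends e ≠ Sym2.diag v := by
    intro h
    exact hl e (h ▸ Sym2.diag_isDiag v)
  rw [if_neg hne]

open Classical in
private lemma degreeIn_eq_card_aux {V E : Type*} [Fintype E] (G : Multigraph V E)
    (hl : G.Loopless) (S : Set E) (v : V) :
    G.degreeIn S v =
      (Finset.univ.filter (fun e => e ∈ S ∧ v ∈ G.ends e)).card := by
  classical
  unfold Multigraph.degreeIn
  rw [Finset.card_filter]
  apply Finset.sum_congr rfl
  intro e _
  rw [incCount_eq_aux G hl]
  by_cases hS : e ∈ S <;> by_cases hv : v ∈ G.ends e <;> simp [hS, hv]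

private lemma exists_color_aux {Γ V : Type*} [Group Γ] [MulAction Γ V] (l : Γ)
    (hll : ∀ v : V, l • l • v = v) (hfree : ∀ v : V, l • v ≠ v) :
    ∃ c : V → Bool, ∀ v : V, c (l • v) ≠ c v := by
  classical
  let r : Setoid V :=
    ⟨fun v w => w = v ∨ w = l • v, by
      constructor
      · intro v; exact Or.inl rfl
      · rintro v w (h | h)
        · exact Or.inl h.symm
        · right; rw [h, hll]
      · rintro v w x (h1 | h1) (h2 | h2)
        · exact Or.inl (h2.trans h1)
        · right; rw [h2, h1]
        · right; rw [h2, h1]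
        · left; rw [h2, h1, hll]⟩
  refine ⟨fun v => if (Quotient.mk r v).out = v then true else false, ?_⟩
  intro v
  have hq : (Quotient.mk r (l • v)) = Quotient.mk r v :=
    Quotient.sound (Or.inr (hll v).symm)
  have hrel : v = (Quotient.mk r v).out ∨ v = l • (Quotient.mk r v).out :=
    Quotient.exact ((Quotient.mk r v).out_eq)
  simp only [hq]
  rcases hrel with h | h
  · rw [if_pos h.symm, if_neg]
    · simp
    · intro hc
      exact hfree v (by rw [← hc, ← h])
  · have ho : (Quotient.mk r v).out = l • v := by
      conv_rhs => rw [h, hll]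
    rw [if_pos ho, if_neg]
    · simp
    · rw [ho]; exact hfree v

open Multigraph in
/-- Let Γ act transitively on a loopless multigraph G, let u be a vertex and λ a central
involution of Γ acting without fixed vertices, with λ • u adjacent to u, and suppose
every vertex has degree k in the generated subgraph G_{u,λ}. Then every connected
component of G_{u,λ} consists of two vertices v, λ • v joined by k parallel edges; if
k = 1 then G_{u,λ} is a perfect matching of G, and if k ≥ 3 then G_{u,λ} contains a
spanning cubic bipartite subgraph. -/
theorem stmt18 {Γ V E : Type*} [Group Γ] [MulAction Γ V] [MulAction Γ E] [Fintype E]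
    (G : Multigraph V E) (hloopless : G.Loopless)
    (hcompat : ∀ (γ : Γ) (e : E), G.ends (γ • e) = (G.ends e).map (γ • ·))
    (htrans : ∀ v w : V, ∃ γ : Γ, γ • v = w)
    (u : V) (l : Γ) (hl2 : l ^ 2 = 1) (hl1 : l ≠ 1) (hlc : l ∈ Subgroup.center Γ)
    (hfree : ∀ v : V, l • v ≠ v)
    (hadj : G.Adj u (l • u))
    (k : ℕ) (hdeg : ∀ v : V, G.degreeIn (genEdges G u l) v = k) :
    (∀ e ∈ genEdges G u l, ∃ v : V, G.ends e = s(v, l • v)) ∧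
      (∀ v : V, Nat.card {e : E // e ∈ genEdges G u l ∧ G.ends e = s(v, l • v)} = k) ∧
      (k = 1 → ∀ v : V, ∃! e : E, e ∈ genEdges G u l ∧ v ∈ G.ends e) ∧
      (3 ≤ k → ∃ T ⊆ genEdges G u l, (∀ v : V, G.degreeIn T v = 3) ∧
        ∃ c : V → Bool, ∀ e ∈ T, ∀ x y : V, G.ends e = s(x, y) → c x ≠ c y) := by
  classical
  have hll : ∀ v : V, l • l • v = v := by
    intro v
    rw [smul_smul, ← sq, hl2, one_smul]
  have hcomm : ∀ γ : Γ, γ * l = l * γ := fun γ => Subgroup.mem_center_iff.mp hlc γ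
  -- characterization of the edge set
  have hmem : ∀ e : E, e ∈ genEdges G u l ↔ ∃ v : V, G.ends e = s(v, l • v) := by
    intro e
    constructor
    · rintro ⟨γ, β, hβ, hends⟩
      refine ⟨γ • u, ?_⟩
      have hβu : β • u = u := hβ
      have key : (γ * β * l) • u = l • γ • u :=
        calc (γ * β * l) • u = γ • β • l • u := by rw [mul_smul, mul_smul]
          _ = γ • l • β • u := by
                rw [← mul_smul β l, hcomm β, mul_smul]
          _ = γ • l • u := by rw [hβu]
          _ = l • γ • u := by rw [← mul_smul, hcomm γ, mul_smul]
      rw [hends, key]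
    · rintro ⟨v, hv⟩
      obtain ⟨γ, hγ⟩ := htrans u v
      refine ⟨γ, 1, Subgroup.one_mem _, ?_⟩
      have h2 : (γ * 1 * l) • u = l • v := by
        rw [mul_one, hcomm γ, mul_smul, hγ]
      rw [hv, h2, hγ]
  set F : V → Finset E := fun v => Finset.univ.filter (fun e => G.ends e = s(v, l • v))
    with hFdef
  have hF_eq : ∀ v : V,
      Finset.univ.filter (fun e => e ∈ genEdges G u l ∧ v ∈ G.ends e) = F v := by
    intro v
    ext e
    simp only [hFdef, Finset.mem_filter, Finset.mem_univ, true_and]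
    constructor
    · rintro ⟨heS, hv⟩
      obtain ⟨w, hw⟩ := (hmem e).mp heS
      rw [hw] at hv ⊢
      rcases Sym2.mem_iff.mp hv with h | h
      · rw [h]
      · have hwv : w = l • v := by rw [h, hll]
        rw [hwv, hll]
        exact Sym2.eq_swap
    · intro h
      refine ⟨(hmem e).mpr ⟨v, h⟩, ?_⟩
      rw [h]
      exact Sym2.mem_iff.mpr (Or.inl rfl)
  have hFcard : ∀ v : V, (F v).card = k := by
    intro v
    rw [← hF_eq v, ← degreeIn_eq_card_aux G hloopless, hdeg]
  have hFswap : ∀ v : V, F (l • v) = F v := by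
    intro v
    have hsym : s(l • v, l • l • v) = s(v, l • v) := by
      rw [hll]; exact Sym2.eq_swap
    simp only [hFdef, hsym]
  refine ⟨fun e he => (hmem e).mp he, ?_, ?_, ?_⟩
  · -- component counts
    intro v
    have hfe : Finset.univ.filter
        (fun e => e ∈ genEdges G u l ∧ G.ends e = s(v, l • v)) = F v := by
      ext e
      simp only [hFdef, Finset.mem_filter, Finset.mem_univ, true_and]
      exact ⟨fun h => h.2, fun h => ⟨(hmem e).mpr ⟨v, h⟩, h⟩⟩
    rw [Nat.card_eq_fintype_card, Fintype.card_subtype, ← hFcard v, ← hfe]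
  · -- perfect matching
    intro hk v
    have h1 : (Finset.univ.filter
        (fun e => e ∈ genEdges G u l ∧ v ∈ G.ends e)).card = 1 := by
      rw [hF_eq, hFcard, hk]
    obtain ⟨a, ha⟩ := Finset.card_eq_one.mp h1
    have haa : a ∈ Finset.univ.filter
        (fun e => e ∈ genEdges G u l ∧ v ∈ G.ends e) := by
      rw [ha]; exact Finset.mem_singleton_self a
    refine ⟨a, (Finset.mem_filter.mp haa).2, ?_⟩
    intro e he
    have : e ∈ Finset.univ.filter
        (fun e => e ∈ genEdges G u l ∧ v ∈ G.ends e) :=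
      Finset.mem_filter.mpr ⟨Finset.mem_univ _, he⟩
    rw [ha] at this
    exact Finset.mem_singleton.mp this
  · -- cubic bipartite spanning subgraph
    intro hk3
    set sel : Finset E → Finset E := fun s =>
      if h : 3 ≤ s.card then (Finset.exists_subset_card_eq (s := s) (n := 3) h).choose else ∅
      with hseldef
    have hsel : ∀ s : Finset E, 3 ≤ s.card → sel s ⊆ s ∧ (sel s).card = 3 := by
      intro s hs
      simp only [hseldef, dif_pos hs]
      exact (Finset.exists_subset_card_eq (s := s) (n := 3) hs).choose_spec
    have hFcard3 : ∀ v : V, 3 ≤ (F v).card := by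
      intro v; rw [hFcard]; exact hk3
    refine ⟨{e | ∃ v : V, e ∈ sel (F v)}, ?_, ?_, ?_⟩
    · rintro e ⟨w, hw⟩
      have hew : e ∈ F w := (hsel (F w) (hFcard3 w)).1 hw
      have : G.ends e = s(w, l • w) := (Finset.mem_filter.mp hew).2
      exact (hmem e).mpr ⟨w, this⟩
    · intro v
      rw [degreeIn_eq_card_aux G hloopless]
      have hfe : Finset.univ.filter
          (fun e => e ∈ {e | ∃ v : V, e ∈ sel (F v)} ∧ v ∈ G.ends e) = sel (F v) := by
        ext e
        simp only [Finset.mem_filter, Finset.mem_univ, true_and, Set.mem_setOf_eq]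
        constructor
        · rintro ⟨⟨w, hw⟩, hv⟩
          have hew : e ∈ F w := (hsel (F w) (hFcard3 w)).1 hw
          have hends : G.ends e = s(w, l • w) := (Finset.mem_filter.mp hew).2
          rw [hends] at hv
          rcases Sym2.mem_iff.mp hv with h | h
          · rw [h]; exact hw
          · rw [h, hFswap w]; exact hw
        · intro h
          refine ⟨⟨v, h⟩, ?_⟩
          have hev : e ∈ F v := (hsel (F v) (hFcard3 v)).1 h
          have hends : G.ends e = s(v, l • v) := (Finset.mem_filter.mp hev).2
          rw [hends]
          exact Sym2.mem_iff.mpr (Or.inl rfl)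
      rw [hfe]
      exact (hsel (F v) (hFcard3 v)).2
    · obtain ⟨c, hc⟩ := exists_color_aux l hll hfree
      refine ⟨c, ?_⟩
      rintro e ⟨w, hw⟩ x y hxy
      have hew : e ∈ F w := (hsel (F w) (hFcard3 w)).1 hw
      have hends : G.ends e = s(w, l • w) := (Finset.mem_filter.mp hew).2
      rw [hxy] at hends
      rcases Sym2.eq_iff.mp hends with ⟨hx, hy⟩ | ⟨hx, hy⟩
      · rw [hx, hy]; exact (hc w).symm
      · rw [hx, hy]; exact hc w
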